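/- Every solution in positive integers of x² + y² = 2z² with gcd(x,y) = 1 satisfies (up to swapping x and y) x = |k² + 2kλ - λ²|, y = |-k² + 2kλ + λ²|, z = k² + λ² for some positive integers k, λ with gcd(k,λ) = 1 and k + λ odd, or (x,y,z) = (1,1,1). -/

import Mathlib

theorem solutions_x_sq_add_y_sq_eq_two_z_sq (x y z : ℤ)
    (hx : 0 < x) (hy : 0 < y) (hz : 0 < z)
    (heq : x ^ 2 + y ^ 2 = 2 * z ^ 2) (hcop : IsCoprime x y) :
    (x = 1 ∧ y = 1 ∧ z = 1) ∨
    ∃ k l : ℤ, 0 < k ∧ 0 < l ∧ IsCoprime k l ∧ Odd (k + l) ∧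
      z = k ^ 2 + l ^ 2 ∧
      ((x = |k ^ 2 + 2 * k * l - l ^ 2| ∧ y = |-k ^ 2 + 2 * k * l + l ^ 2|) ∨
       (y = |k ^ 2 + 2 * k * l - l ^ 2| ∧ x = |-k ^ 2 + 2 * k * l + l ^ 2|)) := by
  have hsq : Even (x ^ 2 + y ^ 2) := ⟨z ^ 2, by linarith⟩
  have hxyeq : Even x ↔ Even y := by
    simpa [Int.even_add, Int.even_pow] using hsq
  obtain ⟨a, ha⟩ := Int.even_add.mpr hxyeq
  obtain ⟨b, hb⟩ := Int.even_sub.mpr hxyeq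
  have hxa : x = a + b := by omega
  have hya : y = a - b := by omega
  have hapos : 0 < a := by omega
  have hpt : PythagoreanTriple a b z := by
    show a * a + b * b = z * z
    nlinarith [heq, hxa, hya]
  have hcop' : Int.gcd a b = 1 := by
    rw [← Int.isCoprime_iff_gcd_eq_one]
    obtain ⟨u, v, huv⟩ := hcop
    exact ⟨u + v, u - v, by rw [hxa, hya] at huv; linarith [huv]⟩
  obtain ⟨m, n, hmn1, hz', hgcd, hparity⟩ :=
    PythagoreanTriple.coprime_classification.mp ⟨hpt, hcop'⟩
  have hzmn : z = m ^ 2 + n ^ 2 := by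
    rcases hz' with h | h
    · exact h
    · nlinarith [sq_nonneg m, sq_nonneg n]
  by_cases hn0 : n = 0
  · subst hn0
    rcases hmn1 with ⟨ha1, hb1⟩ | ⟨ha1, hb1⟩
    · have hxy : x = y := by omega
      have hx1 : x = 1 := by
        have : IsUnit x := isCoprime_self.mp (hxy ▸ hcop)
        rcases Int.isUnit_iff.mp this with h | h <;> omega
      have hy1 : y = 1 := by omega
      have hz1 : z = 1 := by nlinarith
      exact Or.inl ⟨hx1, hy1, hz1⟩
    · omega
  by_cases hm0 : m = 0
  · exfalso
    rcases hmn1 with ⟨ha1, hb1⟩ | ⟨ha1, hb1⟩ <;> subst hm0 <;> nlinarith [sq_nonneg n]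
  -- main case
  have hxm : x = m ^ 2 + 2 * m * n - n ^ 2 := by
    rcases hmn1 with ⟨ha1, hb1⟩ | ⟨ha1, hb1⟩ <;> omega
  have hym : y = |-m ^ 2 + 2 * m * n + n ^ 2| := by
    rcases hmn1 with ⟨ha1, hb1⟩ | ⟨ha1, hb1⟩
    · have hyv : y = -(-m ^ 2 + 2 * m * n + n ^ 2) := by omega
      rw [abs_of_neg (by omega : -m ^ 2 + 2 * m * n + n ^ 2 < 0)]
      exact hyv
    · have hyv : y = -m ^ 2 + 2 * m * n + n ^ 2 := by omega
      rw [abs_of_pos (by omega : (0:ℤ) < -m ^ 2 + 2 * m * n + n ^ 2)]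
      exact hyv
  refine Or.inr ⟨|m|, |n|, abs_pos.mpr hm0, abs_pos.mpr hn0, ?_, ?_, ?_, ?_⟩
  · rw [Int.isCoprime_iff_gcd_eq_one]
    simpa [Int.gcd, Int.natAbs_abs] using hgcd
  · have hevabs : ∀ t : ℤ, Even t → Even |t| := fun t ht => by
      rcases abs_choice t with h | h <;> rw [h]
      · exact ht
      · exact ht.neg
    rcases hparity with ⟨h1, h2⟩ | ⟨h1, h2⟩
    · exact (hevabs m (Int.even_iff.mpr h1)).add_odd
        (odd_abs.mpr (Int.odd_iff.mpr h2))
    · exact Odd.add_even (odd_abs.mpr (Int.odd_iff.mpr h1))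
        (hevabs n (Int.even_iff.mpr h2))
  · rw [sq_abs, sq_abs]; exact hzmn
  · rcases le_or_gt 0 (m * n) with hmn | hmn
    · have habs : |m| * |n| = m * n := by rw [← abs_mul, abs_of_nonneg hmn]
      left
      constructor
      · have h1 : |m| ^ 2 + 2 * |m| * |n| - |n| ^ 2 = x := by
          rw [sq_abs, sq_abs, hxm]; linear_combination 2 * habs
        rw [h1, abs_of_pos hx]
      · have h1 : -|m| ^ 2 + 2 * |m| * |n| + |n| ^ 2 = -m ^ 2 + 2 * m * n + n ^ 2 := by
          rw [sq_abs, sq_abs]; linear_combination 2 * habs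
        rw [h1]; exact hym
    · have habs : |m| * |n| = -(m * n) := by
        rw [← abs_mul, abs_of_neg hmn]
      right
      constructor
      · have h1 : |m| ^ 2 + 2 * |m| * |n| - |n| ^ 2 = -(-m ^ 2 + 2 * m * n + n ^ 2) := by
          rw [sq_abs, sq_abs]; linear_combination 2 * habs
        rw [h1, abs_neg]; exact hym
      · have h1 : -|m| ^ 2 + 2 * |m| * |n| + |n| ^ 2 = -x := by
          rw [sq_abs, sq_abs, hxm]; linear_combination 2 * habs
        rw [h1, abs_neg, abs_of_pos hx]
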